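/- Let s = 2 and let c₁,c₂ be the zeros of P₂ − ζP₁ for some ζ ∈ ℝ with c₁ ≠ c₂, and b the weights satisfying ∑ᵢbᵢcᵢ^{k−1} = 1/k for k = 1,2,3. Set N = ((ζ−1)𝟏 − 2ζc)bᵀ(I − 2C) and A = cbᵀ + βN. If A satisfies the condition bᵀ(Ac)² − bᵀACAc + bᵀC Ac − 1/4 = 0 (the q = 2 case of the condition from the asymmetric bush tree), then β²(1+ζ)² = 0; in particular β = 0 when ζ ≠ −1. -/

import Mathlib

/-- The shifted Legendre polynomial on `[0,1]`, `P_q(x) = (1/q!) dᵠ/dxᵠ [xᵠ(x-1)ᵠ]`. -/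
noncomputable def legP (q : ℕ) : Polynomial ℝ :=
  (q.factorial : ℝ)⁻¹ • (Polynomial.derivative^[q] (Polynomial.X ^ q * (Polynomial.X - 1) ^ q))

lemma legP_one : legP 1 = Polynomial.C 2 * Polynomial.X - 1 := by
  have e : (Polynomial.X ^ 1 * (Polynomial.X - 1) ^ 1 : Polynomial ℝ)
      = Polynomial.X ^ 2 - Polynomial.X := by ring
  simp only [legP, Function.iterate_one, e, Nat.factorial]
  simp [Polynomial.derivative_sub, Polynomial.derivative_X_pow, map_ofNat]
  norm_num

lemma legP_two : legP 2 = Polynomial.C 6 * Polynomial.X ^ 2 - Polynomial.C 6 * Polynomial.X + 1 := by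
  have e : (Polynomial.X ^ 2 * (Polynomial.X - 1) ^ 2 : Polynomial ℝ)
      = Polynomial.X ^ 4 - Polynomial.C 2 * Polynomial.X ^ 3 + Polynomial.X ^ 2 := by
    rw [show (Polynomial.C (2:ℝ)) = 2 from map_ofNat _ 2]; ring
  have h2 : (Polynomial.derivative^[2] (Polynomial.X ^ 2 * (Polynomial.X - 1) ^ 2) : Polynomial ℝ)
      = Polynomial.derivative (Polynomial.derivative (Polynomial.X ^ 2 * (Polynomial.X - 1) ^ 2)) := rfl
  rw [legP, h2, e]
  simp [Polynomial.derivative_sub, Polynomial.derivative_add, Polynomial.derivative_X_pow,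
    Polynomial.smul_eq_C_mul]
  simp only [map_ofNat]
  have hI : Polynomial.C ((2:ℝ))⁻¹ * 2 = 1 := by
    rw [show ((2:Polynomial ℝ)) = Polynomial.C 2 from (map_ofNat _ 2).symm, ← Polynomial.C_mul]
    norm_num
  linear_combination (6 * Polynomial.X ^ 2 - 6 * Polynomial.X + 1) * hI

set_option maxHeartbeats 4000000 in
/-- The two-stage case: the asymmetric bush condition (case `q = 2`) applied to
`A = cbᵀ + βN` forces `β²(1+ζ)² = 0`, hence `β = 0` when `ζ ≠ -1`. -/
theorem two_stage_asymmetric_bush (b c : Fin 2 → ℝ) (ζ β : ℝ)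
    (hne : c 0 ≠ c 1)
    (hzero : ∀ i, (legP 2 - Polynomial.C ζ * legP 1).eval (c i) = 0)
    (hquad : ∀ k : ℕ, 1 ≤ k → k ≤ 3 → ∑ i, b i * c i ^ (k - 1) = 1 / (k : ℝ)) :
    (let N : Matrix (Fin 2) (Fin 2) ℝ :=
      fun i j => ((ζ - 1) - 2 * ζ * c i) * (b j * (1 - 2 * c j))
     let A : Matrix (Fin 2) (Fin 2) ℝ := fun i j => c i * b j + β * N i j
     let Ac : Fin 2 → ℝ := fun i => ∑ j, A i j * c j
     (∑ i, b i * (Ac i) ^ 2) - 2 * (∑ i, ∑ j, b i * A i j * c j * Ac j) +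
       2 * (∑ i, b i * c i * Ac i) - (1 / 2 : ℝ) ^ 2 = 0) →
    β ^ 2 * (1 + ζ) ^ 2 = 0 ∧ (ζ ≠ -1 → β = 0) := by
  intro hyp
  have heval : ∀ x : ℝ, (legP 2 - Polynomial.C ζ * legP 1).eval x
      = (6 * x ^ 2 - 6 * x + 1) - ζ * (2 * x - 1) := by
    intro x
    simp only [legP_one, legP_two, Polynomial.eval_sub, Polynomial.eval_add, Polynomial.eval_mul,
      Polynomial.eval_pow, Polynomial.eval_C, Polynomial.eval_X, Polynomial.eval_one]
  have hq0 := hzero 0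
  have hq1 := hzero 1
  rw [heval] at hq0 hq1
  have hsum : b 0 + b 1 = 1 := by
    have h := hquad 1 (by norm_num) (by norm_num)
    simpa [Fin.sum_univ_two] using h
  have h2q : b 0 * c 0 + b 1 * c 1 = 1 / 2 := by
    have h := hquad 2 (by norm_num) (by norm_num)
    simpa [Fin.sum_univ_two] using h
  have hd : c 0 - c 1 ≠ 0 := sub_ne_zero.mpr hne
  have key : (c 0 - c 1) * (6 * (c 0 + c 1) - 6 - 2 * ζ) = 0 := by linear_combination hq0 - hq1
  have hs : c 0 = (3 + ζ) / 3 - c 1 := by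
    have h := (mul_eq_zero.mp key).resolve_left hd
    linarith
  have hr4 : c 1 ^ 2 = (3 + ζ) / 3 * c 1 - (1 + ζ) / 6 := by linear_combination (1/6 : ℝ) * hq1
  have hb1 : b 1 = 1 - b 0 := by linarith
  have hbd : b 0 * ((3 + ζ) / 3 - 2 * c 1) = 1 / 2 - c 1 := by
    linear_combination h2q - c 1 * hsum - b 0 * hs
  simp only [Fin.sum_univ_two] at hyp
  rw [hs, hb1] at hyp
  have hH : ((1/8:ℝ) + (-1/4:ℝ)*β^2 + (1/4:ℝ)*ζ + (1/3:ℝ)*ζ*β + (-13/12:ℝ)*ζ*β^2 + (1/6:ℝ)*ζ^2 + (8/9:ℝ)*ζ^2*β + (-16/9:ℝ)*ζ^2*β^2 + (5/108:ℝ)*ζ^3 + (8/9:ℝ)*ζ^3*β + (-71/54:ℝ)*ζ^3*β^2 + (1/216:ℝ)*ζ^4 + (34/81:ℝ)*ζ^4*β + (-97/324:ℝ)*ζ^4*β^2 + (23/243:ℝ)*ζ^5*β + (167/972:ℝ)*ζ^5*β^2 + (2/243:ℝ)*ζ^6*β + (7/54:ℝ)*ζ^6*β^2 + (23/729:ℝ)*ζ^7*β^2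 + (2/729:ℝ)*ζ^8*β^2 + (-3/2:ℝ)*c 1 + (7/2:ℝ)*c 1*β^2 + (-9/4:ℝ)*c 1*ζ + (-16/3:ℝ)*c 1*ζ*β + (14:ℝ)*c 1*ζ*β^2 + (-13/12:ℝ)*c 1*ζ^2 + (-106/9:ℝ)*c 1*ζ^2*β + (175/9:ℝ)*c 1*ζ^2*β^2 + (-7/36:ℝ)*c 1*ζ^3 + (-86/9:ℝ)*c 1*ζ^3*β + (263/27:ℝ)*c 1*ζ^3*β^2 + (-1/108:ℝ)*c 1*ζ^4 + (-286/81:ℝ)*c 1*ζ^4*β + (-97/54:ℝ)*c 1*ζ^4*β^2 + (-142/243:ℝ)*c 1*ζ^5*β + (-953/243:ℝ)*c 1*ζ^5*β^2 + (-8/243:ℝ)*c 1*ζ^6*β + (-391/243:ℝ)*c 1*ζ^6*β^2 + (-200/729:ℝ)*c 1*ζ^7*β^2 + (-4/243:ℝ)*c 1*ζ^8*β^2 + (27/4:ℝ)*c 1^2 + (-21:ℝ)*c 1^2*β^2 + (29/4:ℝ)*c 1^2*ζ + (106/3:ℝ)*c 1^2*ζ*β + (-77:ℝ)*c 1^2*ζ*β^2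 + (9/4:ℝ)*c 1^2*ζ^2 + (190/3:ℝ)*c 1^2*ζ^2*β + (-748/9:ℝ)*c 1^2*ζ^2*β^2 + (7/36:ℝ)*c 1^2*ζ^3 + (362/9:ℝ)*c 1^2*ζ^3*β + (-94/9:ℝ)*c 1^2*ζ^3*β^2 + (886/81:ℝ)*c 1^2*ζ^4*β + (1003/27:ℝ)*c 1^2*ζ^4*β^2 + (32/27:ℝ)*c 1^2*ζ^5*β + (6413/243:ℝ)*c 1^2*ζ^5*β^2 + (8/243:ℝ)*c 1^2*ζ^6*β + (1780/243:ℝ)*c 1^2*ζ^6*β^2 + (632/729:ℝ)*c 1^2*ζ^7*β^2 + (8/243:ℝ)*c 1^2*ζ^8*β^2 + (-29/2:ℝ)*c 1^3 + (70:ℝ)*c 1^3*β^2 + (-10:ℝ)*c 1^3*ζ + (-380/3:ℝ)*c 1^3*ζ*β + (700/3:ℝ)*c 1^3*ζ*β^2 + (-3/2:ℝ)*c 1^3*ζ^2 + (-1600/9:ℝ)*c 1^3*ζ^2*β + (1388/9:ℝ)*c 1^3*ζ^2*β^2 + (-748/9:ℝ)*c 1^3*ζ^3*β + (-3232/27:ℝ)*c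 1^3*ζ^3*β^2 + (-400/27:ℝ)*c 1^3*ζ^4*β + (-14998/81:ℝ)*c 1^3*ζ^4*β^2 + (-64/81:ℝ)*c 1^3*ζ^5*β + (-248/3:ℝ)*c 1^3*ζ^5*β^2 + (-3832/243:ℝ)*c 1^3*ζ^6*β^2 + (-32/27:ℝ)*c 1^3*ζ^7*β^2 + (-16/729:ℝ)*c 1^3*ζ^8*β^2 + (15:ℝ)*c 1^4 + (-140:ℝ)*c 1^4*β^2 + (5:ℝ)*c 1^4*ζ + (800/3:ℝ)*c 1^4*ζ*β + (-420:ℝ)*c 1^4*ζ*β^2 + (2480/9:ℝ)*c 1^4*ζ^2*β + (-44/9:ℝ)*c 1^4*ζ^2*β^2 + (760/9:ℝ)*c 1^4*ζ^3*β + (15260/27:ℝ)*c 1^4*ζ^3*β^2 + (200/27:ℝ)*c 1^4*ζ^4*β + (12140/27:ℝ)*c 1^4*ζ^4*β^2 + (10940/81:ℝ)*c 1^4*ζ^5*β^2 + (440/27:ℝ)*c 1^4*ζ^6*β^2 + (16/27:ℝ)*c 1^4*ζ^7*β^2 + (-6:ℝ)*c 1^5 + (168:ℝ)*c 1^5*β^2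 + (-992/3:ℝ)*c 1^5*ζ*β + (448:ℝ)*c 1^5*ζ*β^2 + (-224:ℝ)*c 1^5*ζ^2*β + (-4888/9:ℝ)*c 1^5*ζ^2*β^2 + (-304/9:ℝ)*c 1^5*ζ^3*β + (-10448/9:ℝ)*c 1^5*ζ^3*β^2 + (-16024/27:ℝ)*c 1^5*ζ^4*β^2 + (-112:ℝ)*c 1^5*ζ^5*β^2 + (-176/27:ℝ)*c 1^5*ζ^6*β^2 + (-112:ℝ)*c 1^6*β^2 + (224:ℝ)*c 1^6*ζ*β + (-784/3:ℝ)*c 1^6*ζ*β^2 + (224/3:ℝ)*c 1^6*ζ^2*β + (1120:ℝ)*c 1^6*ζ^2*β^2 + (11648/9:ℝ)*c 1^6*ζ^3*β^2 + (1232/3:ℝ)*c 1^6*ζ^4*β^2 + (112/3:ℝ)*c 1^6*ζ^5*β^2 + (32:ℝ)*c 1^7*β^2 + (-64:ℝ)*c 1^7*ζ*β + (64:ℝ)*c 1^7*ζ*β^2 + (-3328/3:ℝ)*c 1^7*ζ^2*β^2 + (-768:ℝ)*c 1^7*ζ^3*β^2 + (-352/3:ℝ)*c 1^7*ζ^4*β^2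 + (576:ℝ)*c 1^8*ζ^2*β^2 + (192:ℝ)*c 1^8*ζ^3*β^2 + (-128:ℝ)*c 1^9*ζ^2*β^2) = (0 : ℝ) := by
    linear_combination ((3 + ζ) / 3 - 2 * c 1) ^ 3 * hyp - ((3/4:ℝ) + (-1/2:ℝ)*β^2 + (1:ℝ)*ζ + (2/3:ℝ)*ζ*β + (-13/6:ℝ)*ζ*β^2 + (1/2:ℝ)*ζ^2 + (16/9:ℝ)*ζ^2*β + (-32/9:ℝ)*ζ^2*β^2 + (1/9:ℝ)*ζ^3 + (16/9:ℝ)*ζ^3*β + (-71/27:ℝ)*ζ^3*β^2 + (1/108:ℝ)*ζ^4 + (68/81:ℝ)*ζ^4*β + (-97/162:ℝ)*ζ^4*β^2 + (46/243:ℝ)*ζ^5*β + (167/486:ℝ)*ζ^5*β^2 + (4/243:ℝ)*ζ^6*β + (7/27:ℝ)*ζ^6*β^2 + (46/729:ℝ)*ζ^7*β^2 + (4/729:ℝ)*ζ^8*β^2 + (-9/2:ℝ)*c 1 + (6:ℝ)*c 1*β^2 + (-9/2:ℝ)*c 1*ζ + (-28/3:ℝ)*c 1*ζ*β + (71/3:ℝ)*c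 1*ζ*β^2 + (-3/2:ℝ)*c 1*ζ^2 + (-20:ℝ)*c 1*ζ^2*β + (286/9:ℝ)*c 1*ζ^2*β^2 + (-1/6:ℝ)*c 1*ζ^3 + (-140/9:ℝ)*c 1*ζ^3*β + (128/9:ℝ)*c 1*ζ^3*β^2 + (-436/81:ℝ)*c 1*ζ^4*β + (-388/81:ℝ)*c 1*ζ^4*β^2 + (-64/81:ℝ)*c 1*ζ^5*β + (-1739/243:ℝ)*c 1*ζ^5*β^2 + (-8/243:ℝ)*c 1*ζ^6*β + (-656/243:ℝ)*c 1*ζ^6*β^2 + (-308/729:ℝ)*c 1*ζ^7*β^2 + (-16/729:ℝ)*c 1*ζ^8*β^2 + (21/2:ℝ)*c 1^2 + (4:ℝ)*c 1^2*β + (-28:ℝ)*c 1^2*β^2 + (15/2:ℝ)*c 1^2*ζ + (52:ℝ)*c 1^2*ζ*β + (-326/3:ℝ)*c 1^2*ζ*β^2 + (3/2:ℝ)*c 1^2*ζ^2 + (84:ℝ)*c 1^2*ζ^2*β + (-104:ℝ)*c 1^2*ζ^2*β^2 + (1/18:ℝ)*c 1^2*ζ^3 + (1300/27:ℝ)*c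 1^2*ζ^3*β + (224/27:ℝ)*c 1^2*ζ^3*β^2 + (296/27:ℝ)*c 1^2*ζ^4*β + (5284/81:ℝ)*c 1^2*ζ^4*β^2 + (64/81:ℝ)*c 1^2*ζ^5*β + (3122/81:ℝ)*c 1^2*ζ^5*β^2 + (2248/243:ℝ)*c 1^2*ζ^6*β^2 + (8/9:ℝ)*c 1^2*ζ^7*β^2 + (16/729:ℝ)*c 1^2*ζ^8*β^2 + (-16:ℝ)*c 1^3 + (-28:ℝ)*c 1^3*β + (64:ℝ)*c 1^3*β^2 + (-9:ℝ)*c 1^3*ζ + (-400/3:ℝ)*c 1^3*ζ*β + (844/3:ℝ)*c 1^3*ζ*β^2 + (-4/3:ℝ)*c 1^3*ζ^2 + (-1424/9:ℝ)*c 1^3*ζ^2*β + (976/9:ℝ)*c 1^3*ζ^2*β^2 + (-1/27:ℝ)*c 1^3*ζ^3 + (-1648/27:ℝ)*c 1^3*ζ^3*β + (-2128/9:ℝ)*c 1^3*ζ^3*β^2 + (-188/27:ℝ)*c 1^3*ζ^4*β + (-6632/27:ℝ)*c 1^3*ζ^4*β^2 + (-7196/81:ℝ)*c 1^3*ζ^5*β^2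 + (-352/27:ℝ)*c 1^3*ζ^6*β^2 + (-16/27:ℝ)*c 1^3*ζ^7*β^2 + (24:ℝ)*c 1^4 + (72:ℝ)*c 1^4*β + (-72:ℝ)*c 1^4*β^2 + (10:ℝ)*c 1^4*ζ + (416/3:ℝ)*c 1^4*ζ*β + (-1408/3:ℝ)*c 1^4*ζ*β^2 + (2/3:ℝ)*c 1^4*ζ^2 + (352/3:ℝ)*c 1^4*ζ^2*β + (2008/9:ℝ)*c 1^4*ζ^2*β^2 + (208/9:ℝ)*c 1^4*ζ^3*β + (6712/9:ℝ)*c 1^4*ζ^3*β^2 + (-8/27:ℝ)*c 1^4*ζ^4*β + (3896/9:ℝ)*c 1^4*ζ^4*β^2 + (848/9:ℝ)*c 1^4*ζ^5*β^2 + (176/27:ℝ)*c 1^4*ζ^6*β^2 + (-24:ℝ)*c 1^5 + (-80:ℝ)*c 1^5*β + (32:ℝ)*c 1^5*β^2 + (-4:ℝ)*c 1^5*ζ + (16:ℝ)*c 1^5*ζ*β + (1600/3:ℝ)*c 1^5*ζ*β^2 + (16/3:ℝ)*c 1^5*ζ^2*β + (-2656/3:ℝ)*c 1^5*ζ^2*β^2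 + (16/3:ℝ)*c 1^5*ζ^3*β + (-9968/9:ℝ)*c 1^5*ζ^3*β^2 + (-1120/3:ℝ)*c 1^5*ζ^4*β^2 + (-1024/27:ℝ)*c 1^5*ζ^5*β^2 + (8:ℝ)*c 1^6 + (32:ℝ)*c 1^6*β + (-128:ℝ)*c 1^6*ζ*β + (-384:ℝ)*c 1^6*ζ*β^2 + (-32:ℝ)*c 1^6*ζ^2*β + (3808/3:ℝ)*c 1^6*ζ^2*β^2 + (832:ℝ)*c 1^6*ζ^3*β^2 + (128:ℝ)*c 1^6*ζ^4*β^2 + (64:ℝ)*c 1^7*ζ*β + (128:ℝ)*c 1^7*ζ*β^2 + (-896:ℝ)*c 1^7*ζ^2*β^2 + (-256:ℝ)*c 1^7*ζ^3*β^2 + (256:ℝ)*c 1^8*ζ^2*β^2 + (3/2:ℝ)*b 0 + (-1:ℝ)*b 0*β^2 + (5/2:ℝ)*b 0*ζ + (4/3:ℝ)*b 0*ζ*β + (-14/3:ℝ)*b 0*ζ*β^2 + (5/3:ℝ)*b 0*ζ^2 + (4:ℝ)*b 0*ζ^2*β + (-77/9:ℝ)*b 0*ζ^2*β^2 + (5/9:ℝ)*b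 0*ζ^3 + (128/27:ℝ)*b 0*ζ^3*β + (-206/27:ℝ)*b 0*ζ^3*β^2 + (5/54:ℝ)*b 0*ζ^4 + (232/81:ℝ)*b 0*ζ^4*β + (-239/81:ℝ)*b 0*ζ^4*β^2 + (1/162:ℝ)*b 0*ζ^5 + (76/81:ℝ)*b 0*ζ^5*β + (70/243:ℝ)*b 0*ζ^5*β^2 + (116/729:ℝ)*b 0*ζ^6*β + (545/729:ℝ)*b 0*ζ^6*β^2 + (8/729:ℝ)*b 0*ζ^7*β + (218/729:ℝ)*b 0*ζ^7*β^2 + (116/2187:ℝ)*b 0*ζ^8*β^2 + (8/2187:ℝ)*b 0*ζ^9*β^2 + (-13:ℝ)*b 0*c 1 + (4:ℝ)*b 0*c 1*β + (8:ℝ)*b 0*c 1*β^2 + (-53/3:ℝ)*b 0*c 1*ζ + (-8:ℝ)*b 0*c 1*ζ*β + (128/3:ℝ)*b 0*c 1*ζ*β^2 + (-82/9:ℝ)*b 0*c 1*ζ^2 + (-100/3:ℝ)*b 0*c 1*ζ^2*β + (644/9:ℝ)*b 0*c 1*ζ^2*β^2 + (-58/27:ℝ)*b 0*c 1*ζ^3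 + (-968/27:ℝ)*b 0*c 1*ζ^3*β + (1292/27:ℝ)*b 0*c 1*ζ^3*β^2 + (-17/81:ℝ)*b 0*c 1*ζ^4 + (-476/27:ℝ)*b 0*c 1*ζ^4*β + (272/81:ℝ)*b 0*c 1*ζ^4*β^2 + (-1/243:ℝ)*b 0*c 1*ζ^5 + (-344/81:ℝ)*b 0*c 1*ζ^5*β + (-3256/243:ℝ)*b 0*c 1*ζ^5*β^2 + (-4/9:ℝ)*b 0*c 1*ζ^6*β + (-1940/243:ℝ)*b 0*c 1*ζ^6*β^2 + (-8/729:ℝ)*b 0*c 1*ζ^7*β + (-484/243:ℝ)*b 0*c 1*ζ^7*β^2 + (-160/729:ℝ)*b 0*c 1*ζ^8*β^2 + (-16/2187:ℝ)*b 0*c 1*ζ^9*β^2 + (43:ℝ)*b 0*c 1^2 + (-36:ℝ)*b 0*c 1^2*β + (-24:ℝ)*b 0*c 1^2*β^2 + (136/3:ℝ)*b 0*c 1^2*ζ + (28:ℝ)*b 0*c 1^2*ζ*β + (-168:ℝ)*b 0*c 1^2*ζ*β^2 + (50/3:ℝ)*b 0*c 1^2*ζ^2 + (400/3:ℝ)*b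 0*c 1^2*ζ^2*β + (-764/3:ℝ)*b 0*c 1^2*ζ^2*β^2 + (64/27:ℝ)*b 0*c 1^2*ζ^3 + (1048/9:ℝ)*b 0*c 1^2*ζ^3*β + (-320/3:ℝ)*b 0*c 1^2*ζ^3*β^2 + (7/81:ℝ)*b 0*c 1^2*ζ^4 + (380/9:ℝ)*b 0*c 1^2*ζ^4*β + (1456/27:ℝ)*b 0*c 1^2*ζ^4*β^2 + (524/81:ℝ)*b 0*c 1^2*ζ^5*β + (200/3:ℝ)*b 0*c 1^2*ζ^5*β^2 + (8/27:ℝ)*b 0*c 1^2*ζ^6*β + (1964/81:ℝ)*b 0*c 1^2*ζ^6*β^2 + (304/81:ℝ)*b 0*c 1^2*ζ^7*β^2 + (16/81:ℝ)*b 0*c 1^2*ζ^8*β^2 + (-64:ℝ)*b 0*c 1^3 + (128:ℝ)*b 0*c 1^3*β + (32:ℝ)*b 0*c 1^3*β^2 + (-48:ℝ)*b 0*c 1^3*ζ + (-368/3:ℝ)*b 0*c 1^3*ζ*β + (1120/3:ℝ)*b 0*c 1^3*ζ*β^2 + (-32/3:ℝ)*b 0*c 1^3*ζ^2 + (-1024/3:ℝ)*b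 0*c 1^3*ζ^2*β + (4864/9:ℝ)*b 0*c 1^3*ζ^2*β^2 + (-16/27:ℝ)*b 0*c 1^3*ζ^3 + (-5600/27:ℝ)*b 0*c 1^3*ζ^3*β + (3296/27:ℝ)*b 0*c 1^3*ζ^3*β^2 + (-1280/27:ℝ)*b 0*c 1^3*ζ^4*β + (-1600/9:ℝ)*b 0*c 1^3*ζ^4*β^2 + (-272/81:ℝ)*b 0*c 1^3*ζ^5*β + (-9920/81:ℝ)*b 0*c 1^3*ζ^5*β^2 + (-2272/81:ℝ)*b 0*c 1^3*ζ^6*β^2 + (-512/243:ℝ)*b 0*c 1^3*ζ^7*β^2 + (32:ℝ)*b 0*c 1^4 + (-224:ℝ)*b 0*c 1^4*β + (-16:ℝ)*b 0*c 1^4*β^2 + (40/3:ℝ)*b 0*c 1^4*ζ + (416:ℝ)*b 0*c 1^4*ζ*β + (-1504/3:ℝ)*b 0*c 1^4*ζ*β^2 + (8/9:ℝ)*b 0*c 1^4*ζ^2 + (1696/3:ℝ)*b 0*c 1^4*ζ^2*β + (-8176/9:ℝ)*b 0*c 1^4*ζ^2*β^2 + (608/3:ℝ)*b 0*c 1^4*ζ^3*β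 + (-2144/9:ℝ)*b 0*c 1^4*ζ^3*β^2 + (64/3:ℝ)*b 0*c 1^4*ζ^4*β + (1568/9:ℝ)*b 0*c 1^4*ζ^4*β^2 + (2432/27:ℝ)*b 0*c 1^4*ζ^5*β^2 + (32/3:ℝ)*b 0*c 1^4*ζ^6*β^2 + (16:ℝ)*b 0*c 1^5 + (192:ℝ)*b 0*c 1^5*β + (16/3:ℝ)*b 0*c 1^5*ζ + (-768:ℝ)*b 0*c 1^5*ζ*β + (384:ℝ)*b 0*c 1^5*ζ*β^2 + (-1600/3:ℝ)*b 0*c 1^5*ζ^2*β + (1472:ℝ)*b 0*c 1^5*ζ^2*β^2 + (-256/3:ℝ)*b 0*c 1^5*ζ^3*β + (1856/3:ℝ)*b 0*c 1^5*ζ^3*β^2 + (-512/27:ℝ)*b 0*c 1^5*ζ^5*β^2 + (-16:ℝ)*b 0*c 1^6 + (-64:ℝ)*b 0*c 1^6*β + (704:ℝ)*b 0*c 1^6*ζ*β + (-128:ℝ)*b 0*c 1^6*ζ*β^2 + (640/3:ℝ)*b 0*c 1^6*ζ^2*β + (-5824/3:ℝ)*b 0*c 1^6*ζ^2*β^2 +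 (-768:ℝ)*b 0*c 1^6*ζ^3*β^2 + (-512/9:ℝ)*b 0*c 1^6*ζ^4*β^2 + (-256:ℝ)*b 0*c 1^7*ζ*β + (1536:ℝ)*b 0*c 1^7*ζ^2*β^2 + (1024/3:ℝ)*b 0*c 1^7*ζ^3*β^2 + (-512:ℝ)*b 0*c 1^8*ζ^2*β^2 + (-1:ℝ)*b 0^2 + (-2:ℝ)*b 0^2*ζ + (-4:ℝ)*b 0^2*ζ*β + (-5/3:ℝ)*b 0^2*ζ^2 + (-32/3:ℝ)*b 0^2*ζ^2*β + (-4:ℝ)*b 0^2*ζ^2*β^2 + (-20/27:ℝ)*b 0^2*ζ^3 + (-12:ℝ)*b 0^2*ζ^3*β + (-40/3:ℝ)*b 0^2*ζ^3*β^2 + (-5/27:ℝ)*b 0^2*ζ^4 + (-200/27:ℝ)*b 0^2*ζ^4*β + (-172/9:ℝ)*b 0^2*ζ^4*β^2 + (-2/81:ℝ)*b 0^2*ζ^5 + (-220/81:ℝ)*b 0^2*ζ^5*β + (-416/27:ℝ)*b 0^2*ζ^5*β^2 + (-1/729:ℝ)*b 0^2*ζ^6 + (-16/27:ℝ)*b 0^2*ζ^6*β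 + (-620/81:ℝ)*b 0^2*ζ^6*β^2 + (-52/729:ℝ)*b 0^2*ζ^7*β + (-584/243:ℝ)*b 0^2*ζ^7*β^2 + (-8/2187:ℝ)*b 0^2*ζ^8*β + (-340/729:ℝ)*b 0^2*ζ^8*β^2 + (-112/2187:ℝ)*b 0^2*ζ^9*β^2 + (-16/6561:ℝ)*b 0^2*ζ^10*β^2 + (10:ℝ)*b 0^2*c 1 + (50/3:ℝ)*b 0^2*c 1*ζ + (48:ℝ)*b 0^2*c 1*ζ*β + (100/9:ℝ)*b 0^2*c 1*ζ^2 + (328/3:ℝ)*b 0^2*c 1*ζ^2*β + (56:ℝ)*b 0^2*c 1*ζ^2*β^2 + (100/27:ℝ)*b 0^2*c 1*ζ^3 + (920/9:ℝ)*b 0^2*c 1*ζ^3*β + (488/3:ℝ)*b 0^2*c 1*ζ^3*β^2 + (50/81:ℝ)*b 0^2*c 1*ζ^4 + (1360/27:ℝ)*b 0^2*c 1*ζ^4*β + (1792/9:ℝ)*b 0^2*c 1*ζ^4*β^2 + (10/243:ℝ)*b 0^2*c 1*ζ^5 + (1120/81:ℝ)*b 0^2*c 1*ζ^5*β + (400/3:ℝ)*b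 0^2*c 1*ζ^5*β^2 + (488/243:ℝ)*b 0^2*c 1*ζ^6*β + (4280/81:ℝ)*b 0^2*c 1*ζ^6*β^2 + (88/729:ℝ)*b 0^2*c 1*ζ^7*β + (3016/243:ℝ)*b 0^2*c 1*ζ^7*β^2 + (1168/729:ℝ)*b 0^2*c 1*ζ^8*β^2 + (64/729:ℝ)*b 0^2*c 1*ζ^9*β^2 + (-40:ℝ)*b 0^2*c 1^2 + (-160/3:ℝ)*b 0^2*c 1^2*ζ + (-248:ℝ)*b 0^2*c 1^2*ζ*β + (-80/3:ℝ)*b 0^2*c 1^2*ζ^2 + (-1400/3:ℝ)*b 0^2*c 1^2*ζ^2*β + (-336:ℝ)*b 0^2*c 1^2*ζ^2*β^2 + (-160/27:ℝ)*b 0^2*c 1^2*ζ^3 + (-1040/3:ℝ)*b 0^2*c 1^2*ζ^3*β + (-2512/3:ℝ)*b 0^2*c 1^2*ζ^3*β^2 + (-40/81:ℝ)*b 0^2*c 1^2*ζ^4 + (-3440/27:ℝ)*b 0^2*c 1^2*ζ^4*β + (-2560/3:ℝ)*b 0^2*c 1^2*ζ^4*β^2 + (-1880/81:ℝ)*b 0^2*c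 1^2*ζ^5*β + (-12320/27:ℝ)*b 0^2*c 1^2*ζ^5*β^2 + (-136/81:ℝ)*b 0^2*c 1^2*ζ^6*β + (-10960/81:ℝ)*b 0^2*c 1^2*ζ^6*β^2 + (-1712/81:ℝ)*b 0^2*c 1^2*ζ^7*β^2 + (-992/729:ℝ)*b 0^2*c 1^2*ζ^8*β^2 + (80:ℝ)*b 0^2*c 1^3 + (80:ℝ)*b 0^2*c 1^3*ζ + (720:ℝ)*b 0^2*c 1^3*ζ*β + (80/3:ℝ)*b 0^2*c 1^3*ζ^2 + (3200/3:ℝ)*b 0^2*c 1^3*ζ^2*β + (1120:ℝ)*b 0^2*c 1^3*ζ^2*β^2 + (80/27:ℝ)*b 0^2*c 1^3*ζ^3 + (1760/3:ℝ)*b 0^2*c 1^3*ζ^3*β + (7040/3:ℝ)*b 0^2*c 1^3*ζ^3*β^2 + (1280/9:ℝ)*b 0^2*c 1^3*ζ^4*β + (1920:ℝ)*b 0^2*c 1^3*ζ^4*β^2 + (1040/81:ℝ)*b 0^2*c 1^3*ζ^5*β + (20800/27:ℝ)*b 0^2*c 1^3*ζ^5*β^2 + (12320/81:ℝ)*b 0^2*c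 1^3*ζ^6*β^2 + (320/27:ℝ)*b 0^2*c 1^3*ζ^7*β^2 + (-80:ℝ)*b 0^2*c 1^4 + (-160/3:ℝ)*b 0^2*c 1^4*ζ + (-1280:ℝ)*b 0^2*c 1^4*ζ*β + (-80/9:ℝ)*b 0^2*c 1^4*ζ^2 + (-4160/3:ℝ)*b 0^2*c 1^4*ζ^2*β + (-2240:ℝ)*b 0^2*c 1^4*ζ^2*β^2 + (-4480/9:ℝ)*b 0^2*c 1^4*ζ^3*β + (-3840:ℝ)*b 0^2*c 1^4*ζ^3*β^2 + (-1600/27:ℝ)*b 0^2*c 1^4*ζ^4*β + (-21440/9:ℝ)*b 0^2*c 1^4*ζ^4*β^2 + (-640:ℝ)*b 0^2*c 1^4*ζ^5*β^2 + (-5120/81:ℝ)*b 0^2*c 1^4*ζ^6*β^2 + (32:ℝ)*b 0^2*c 1^5 + (32/3:ℝ)*b 0^2*c 1^5*ζ + (1408:ℝ)*b 0^2*c 1^5*ζ*β + (2944/3:ℝ)*b 0^2*c 1^5*ζ^2*β + (2688:ℝ)*b 0^2*c 1^5*ζ^2*β^2 + (512/3:ℝ)*b 0^2*c 1^5*ζ^3*β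 + (10880/3:ℝ)*b 0^2*c 1^5*ζ^3*β^2 + (1536:ℝ)*b 0^2*c 1^5*ζ^4*β^2 + (5632/27:ℝ)*b 0^2*c 1^5*ζ^5*β^2 + (-896:ℝ)*b 0^2*c 1^6*ζ*β + (-896/3:ℝ)*b 0^2*c 1^6*ζ^2*β + (-1792:ℝ)*b 0^2*c 1^6*ζ^2*β^2 + (-1792:ℝ)*b 0^2*c 1^6*ζ^3*β^2 + (-3584/9:ℝ)*b 0^2*c 1^6*ζ^4*β^2 + (256:ℝ)*b 0^2*c 1^7*ζ*β + (512:ℝ)*b 0^2*c 1^7*ζ^2*β^2 + (1024/3:ℝ)*b 0^2*c 1^7*ζ^3*β^2) * hbd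
  have hG : β ^ 2 * (1 + ζ) ^ 2 * ((3 + ζ) / 3 - 2 * c 1) ^ 4 = 0 := by
    linear_combination ((-36 : ℝ) * ((3 + ζ) / 3 - 2 * c 1)) * hH + ((27:ℝ) + (-48:ℝ)*β^2 + (36:ℝ)*ζ + (72:ℝ)*ζ*β + (-184:ℝ)*ζ*β^2 + (18:ℝ)*ζ^2 + (144:ℝ)*ζ^2*β + (-252:ℝ)*ζ^2*β^2 + (4:ℝ)*ζ^3 + (112:ℝ)*ζ^3*β + (-1288/9:ℝ)*ζ^3*β^2 + (1/3:ℝ)*ζ^4 + (128/3:ℝ)*ζ^4*β + (-280/27:ℝ)*ζ^4*β^2 + (8:ℝ)*ζ^5*β + (728/27:ℝ)*ζ^5*β^2 + (16/27:ℝ)*ζ^6*β + (364/27:ℝ)*ζ^6*β^2 + (8/3:ℝ)*ζ^7*β^2 + (16/81:ℝ)*ζ^8*β^2 + (-216:ℝ)*c 1 + (528:ℝ)*c 1*β^2 + (-216:ℝ)*c 1*ζ + (-864:ℝ)*c 1*ζ*β + (1872:ℝ)*c 1*ζ*β^2 + (-72:ℝ)*c 1*ζ^2 + (-1440:ℝ)*c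 1*ζ^2*β + (2064:ℝ)*c 1*ζ^2*β^2 + (-8:ℝ)*c 1*ζ^3 + (-896:ℝ)*c 1*ζ^3*β + (5072/9:ℝ)*c 1*ζ^3*β^2 + (-256:ℝ)*c 1*ζ^4*β + (-4400/9:ℝ)*c 1*ζ^4*β^2 + (-32:ℝ)*c 1*ζ^5*β + (-11408/27:ℝ)*c 1*ζ^5*β^2 + (-32/27:ℝ)*c 1*ζ^6*β + (-3472/27:ℝ)*c 1*ζ^6*β^2 + (-464/27:ℝ)*c 1*ζ^7*β^2 + (-64/81:ℝ)*c 1*ζ^8*β^2 + (648:ℝ)*c 1^2 + (-2448:ℝ)*c 1^2*β^2 + (432:ℝ)*c 1^2*ζ + (4320:ℝ)*c 1^2*ζ*β + (-7968:ℝ)*c 1^2*ζ*β^2 + (72:ℝ)*c 1^2*ζ^2 + (5760:ℝ)*c 1^2*ζ^2*β + (-5936:ℝ)*c 1^2*ζ^2*β^2 + (2688:ℝ)*c 1^2*ζ^3*β + (1984:ℝ)*c 1^2*ζ^3*β^2 + (512:ℝ)*c 1^2*ζ^4*β + (4336:ℝ)*c 1^2*ζ^4*β^2 + (32:ℝ)*c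 1^2*ζ^5*β + (6176/3:ℝ)*c 1^2*ζ^5*β^2 + (1264/3:ℝ)*c 1^2*ζ^6*β^2 + (320/9:ℝ)*c 1^2*ζ^7*β^2 + (64/81:ℝ)*c 1^2*ζ^8*β^2 + (-864:ℝ)*c 1^3 + (6144:ℝ)*c 1^3*β^2 + (-288:ℝ)*c 1^3*ζ + (-11520:ℝ)*c 1^3*ζ*β + (18176:ℝ)*c 1^3*ζ*β^2 + (-11520:ℝ)*c 1^3*ζ^2*β + (3584:ℝ)*c 1^3*ζ^2*β^2 + (-3584:ℝ)*c 1^3*ζ^3*β + (-51712/3:ℝ)*c 1^3*ζ^3*β^2 + (-1024/3:ℝ)*c 1^3*ζ^4*β + (-43520/3:ℝ)*c 1^3*ζ^4*β^2 + (-13568/3:ℝ)*c 1^3*ζ^5*β^2 + (-5248/9:ℝ)*c 1^3*ζ^6*β^2 + (-640/27:ℝ)*c 1^3*ζ^7*β^2 + (432:ℝ)*c 1^4 + (-8832:ℝ)*c 1^4*β^2 + (17280:ℝ)*c 1^4*ζ*β + (-23424:ℝ)*c 1^4*ζ*β^2 + (11520:ℝ)*c 1^4*ζ^2*β + (19072:ℝ)*c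 1^4*ζ^2*β^2 + (1792:ℝ)*c 1^4*ζ^3*β + (46208:ℝ)*c 1^4*ζ^3*β^2 + (24064:ℝ)*c 1^4*ζ^4*β^2 + (14080/3:ℝ)*c 1^4*ζ^5*β^2 + (2624/9:ℝ)*c 1^4*ζ^6*β^2 + (6912:ℝ)*c 1^5*β^2 + (-13824:ℝ)*c 1^5*ζ*β + (16128:ℝ)*c 1^5*ζ*β^2 + (-4608:ℝ)*c 1^5*ζ^2*β + (-52992:ℝ)*c 1^5*ζ^2*β^2 + (-62208:ℝ)*c 1^5*ζ^3*β^2 + (-19968:ℝ)*c 1^5*ζ^4*β^2 + (-5632/3:ℝ)*c 1^5*ζ^5*β^2 + (-2304:ℝ)*c 1^6*β^2 + (4608:ℝ)*c 1^6*ζ*β + (-4608:ℝ)*c 1^6*ζ*β^2 + (62208:ℝ)*c 1^6*ζ^2*β^2 + (43008:ℝ)*c 1^6*ζ^3*β^2 + (6656:ℝ)*c 1^6*ζ^4*β^2 + (-36864:ℝ)*c 1^7*ζ^2*β^2 + (-12288:ℝ)*c 1^7*ζ^3*β^2 + (9216:ℝ)*c 1^8*ζ^2*β^2) * hr4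
  have hdp : ((3 + ζ) / 3 - 2 * c 1) ≠ 0 := by
    intro h
    apply hd
    rw [hs]
    linarith
  have hmain : β ^ 2 * (1 + ζ) ^ 2 = 0 :=
    (mul_eq_zero.mp hG).resolve_right (pow_ne_zero 4 hdp)
  refine ⟨hmain, fun hz => ?_⟩
  have h1z : (1 + ζ) ≠ 0 := fun h => hz (by linarith)
  have hb2 : β ^ 2 = 0 := by
    rcases mul_eq_zero.mp hmain with h | h
    · exact h
    · exact absurd h (pow_ne_zero 2 h1z)
  exact pow_eq_zero_iff (by norm_num) |>.mp hb2
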